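/- Monotonicity of UI under one-way public communication: for any function f on the support of S, UI(S; (Y,f(S)) \ (Z,f(S))) ≤ UI(S; Y \ Z). -/

import Mathlib

open Finset Real

section Defs
variable {α β γ : Type*} [Fintype α] [Fintype β] [Fintype γ]

/-- `p` is a probability distribution on a finite type. -/
def IsDist (p : α → ℝ) : Prop := (∀ a, 0 ≤ p a) ∧ ∑ a, p a = 1

/-- `k` is a channel (stochastic matrix): each row is a distribution. -/
def IsChannel (k : α → β → ℝ) : Prop := ∀ a, IsDist (k a)

/-- Kullback–Leibler divergence (base 2) between distributions on a finite type. -/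
noncomputable def klDiv2 (p q : α → ℝ) : ℝ := ∑ a, p a * Real.logb 2 (p a / q a)

/-- Channel composition: `(chComp lam mu) a c = ∑ b, lam b c * mu a b`. -/
def chComp (lam : β → γ → ℝ) (mu : α → β → ℝ) : α → γ → ℝ :=
  fun a c => ∑ b, lam b c * mu a b

/-- Conditional (weighted) KL divergence `D(k ∥ k' | pi)`. -/
noncomputable def condKL (pi : α → ℝ) (k k' : α → β → ℝ) : ℝ :=
  ∑ a, pi a * klDiv2 (k a) (k' a)

/-- Weighted output deficiency `δ_o^π(μ,κ) = inf_λ D(κ ∥ λ∘μ | π)`. -/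
noncomputable def defOut (pi : α → ℝ) (mu : α → γ → ℝ) (kap : α → β → ℝ) : ℝ :=
  sInf {d | ∃ lam : γ → β → ℝ, IsChannel lam ∧ d = condKL pi kap (chComp lam mu)}

/-- Risk of a fixed strategy `rho` used after observing through channel `nu`. -/
noncomputable def riskWith {S O A : Type*} [Fintype S] [Fintype O] [Fintype A]
    (pi : S → ℝ) (nu : S → O → ℝ) (rho : O → A → ℝ) (l : S → A → ℝ) : ℝ :=
  ∑ s, pi s * ∑ a, chComp rho nu s a * l s a

/-- Optimal Bayes risk `R(π,ν,ℓ)`. -/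
noncomputable def bayesRisk {S O A : Type*} [Fintype S] [Fintype O] [Fintype A]
    (pi : S → ℝ) (nu : S → O → ℝ) (l : S → A → ℝ) : ℝ :=
  sInf {r | ∃ rho : O → A → ℝ, IsChannel rho ∧ r = riskWith pi nu rho l}

/-- Total variation distance between distributions on a finite type. -/
noncomputable def tvDist (p q : α → ℝ) : ℝ := (∑ a, |p a - q a|) / 2

end Defs

section Joint
variable {S Y Z : Type*} [Fintype S] [Fintype Y] [Fintype Z]

noncomputable def margSY (P : S × Y × Z → ℝ) : S × Y → ℝ := fun p => ∑ z, P (p.1, p.2, z)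
noncomputable def margSZ (P : S × Y × Z → ℝ) : S × Z → ℝ := fun p => ∑ y, P (p.1, y, p.2)
noncomputable def margYZ (P : S × Y × Z → ℝ) : Y × Z → ℝ := fun p => ∑ s, P (s, p.1, p.2)
noncomputable def margS (P : S × Y × Z → ℝ) : S → ℝ := fun s => ∑ y, ∑ z, P (s, y, z)
noncomputable def margY (P : S × Y × Z → ℝ) : Y → ℝ := fun y => ∑ s, ∑ z, P (s, y, z)
noncomputable def margZ (P : S × Y × Z → ℝ) : Z → ℝ := fun z => ∑ s, ∑ y, P (s, y, z)

/-- Mutual information `I(S;Y)` (base 2) of the (S,Y)-marginal of `P`. -/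
noncomputable def miSY (P : S × Y × Z → ℝ) : ℝ :=
  ∑ s, ∑ y, margSY P (s, y) * Real.logb 2 (margSY P (s, y) / (margS P s * margY P y))

/-- Mutual information `I(S;Z)` (base 2) of the (S,Z)-marginal of `P`. -/
noncomputable def miSZ (P : S × Y × Z → ℝ) : ℝ :=
  ∑ s, ∑ z, margSZ P (s, z) * Real.logb 2 (margSZ P (s, z) / (margS P s * margZ P z))

/-- Conditional mutual information `I(S;Y|Z)` (base 2) under `P`. -/
noncomputable def condMI (P : S × Y × Z → ℝ) : ℝ :=
  ∑ s, ∑ y, ∑ z,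
    P (s, y, z) * Real.logb 2 (P (s, y, z) * margZ P z / (margSZ P (s, z) * margYZ P (y, z)))

/-- The feasible set `Δ_P`: joint distributions with the same (S,Y)- and (S,Z)-marginals as `P`. -/
def marginalPolytope (P : S × Y × Z → ℝ) : Set (S × Y × Z → ℝ) :=
  {Q | IsDist Q ∧ margSY Q = margSY P ∧ margSZ Q = margSZ P}

/-- Minimum-synergy unique information `UI(S;Y\Z) = inf_{Q ∈ Δ_P} I_Q(S;Y|Z)`. -/
noncomputable def UI (P : S × Y × Z → ℝ) : ℝ :=
  sInf (condMI '' marginalPolytope P)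

noncomputable def condYgivenS (P : S × Y × Z → ℝ) : S → Y → ℝ :=
  fun s y => margSY P (s, y) / margS P s
noncomputable def condZgivenS (P : S × Y × Z → ℝ) : S → Z → ℝ :=
  fun s z => margSZ P (s, z) / margS P s
noncomputable def condSgivenY (P : S × Y × Z → ℝ) : Y → S → ℝ :=
  fun y s => margSY P (s, y) / margY P y
noncomputable def condSgivenZ (P : S × Y × Z → ℝ) : Z → S → ℝ :=
  fun z s => margSZ P (s, z) / margZ P z

/-- Weighted input deficiency `δ_i^π(μ̄,κ̄) = inf_{λ̄} ∑_y π_Y(y) D(κ̄_y ∥ (μ̄∘λ̄)_y)`. -/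
noncomputable def defIn {Y' Z' S' : Type*} [Fintype Y'] [Fintype Z'] [Fintype S']
    (piY : Y' → ℝ) (mub : Z' → S' → ℝ) (kab : Y' → S' → ℝ) : ℝ :=
  sInf {d | ∃ lb : Y' → Z' → ℝ, IsChannel lb ∧
    d = ∑ y, piY y * klDiv2 (kab y) (chComp mub lb y)}

end Joint

section Aux

lemma klish {ι : Type*} [Fintype ι] (p q : ι → ℝ) (hp : ∀ i, 0 ≤ p i)
    (hq : ∀ i, 0 ≤ q i) (hpos : ∀ i, 0 < p i → 0 < q i)
    (hsum : ∑ i, q i ≤ ∑ i, p i) :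
    ∑ i, p i * Real.logb 2 (q i / p i) ≤ 0 := by
  have hterm : ∀ i, p i * Real.log (q i / p i) ≤ q i - p i := by
    intro i
    rcases eq_or_lt_of_le (hp i) with h0 | h0
    · rw [← h0]; simpa using hq i
    · have hqi := hpos i h0
      have hlog := Real.log_le_sub_one_of_pos (div_pos hqi h0)
      have := mul_le_mul_of_nonneg_left hlog (le_of_lt h0)
      calc p i * Real.log (q i / p i) ≤ p i * (q i / p i - 1) := this
        _ = q i - p i := by field_simp
  have hsum2 : ∑ i, p i * Real.log (q i / p i) ≤ 0 := by
    calc ∑ i, p i * Real.log (q i / p i) ≤ ∑ i, (q i - p i) := Finset.sum_le_sum fun i _ => hterm i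
      _ = ∑ i, q i - ∑ i, p i := Finset.sum_sub_distrib _ _
      _ ≤ 0 := by linarith
  have h2 : (0:ℝ) < Real.log 2 := Real.log_pos (by norm_num)
  calc ∑ i, p i * Real.logb 2 (q i / p i)
      = (∑ i, p i * Real.log (q i / p i)) / Real.log 2 := by
        rw [Finset.sum_div]; congr 1; funext i; rw [Real.logb, mul_div_assoc]
    _ ≤ 0 := div_nonpos_of_nonpos_of_nonneg hsum2 (le_of_lt h2)

end Aux
section Aux2
variable {S Y Z : Type*} [Fintype S] [Fintype Y] [Fintype Z]
variable {Q : S × Y × Z → ℝ}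

lemma margSZ_nonneg (h : ∀ p, 0 ≤ Q p) (s : S) (z : Z) : 0 ≤ margSZ Q (s, z) :=
  Finset.sum_nonneg fun _ _ => h _

lemma margYZ_nonneg (h : ∀ p, 0 ≤ Q p) (y : Y) (z : Z) : 0 ≤ margYZ Q (y, z) :=
  Finset.sum_nonneg fun _ _ => h _

lemma margZ_nonneg (h : ∀ p, 0 ≤ Q p) (z : Z) : 0 ≤ margZ Q z :=
  Finset.sum_nonneg fun _ _ => Finset.sum_nonneg fun _ _ => h _

lemma le_margSZ (h : ∀ p, 0 ≤ Q p) (s : S) (y : Y) (z : Z) : Q (s, y, z) ≤ margSZ Q (s, z) :=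
  Finset.single_le_sum (fun y _ => h (s, y, z)) (Finset.mem_univ y)

lemma le_margYZ (h : ∀ p, 0 ≤ Q p) (s : S) (y : Y) (z : Z) : Q (s, y, z) ≤ margYZ Q (y, z) :=
  Finset.single_le_sum (fun s _ => h (s, y, z)) (Finset.mem_univ s)

lemma margSZ_le_margZ (h : ∀ p, 0 ≤ Q p) (s : S) (z : Z) : margSZ Q (s, z) ≤ margZ Q z :=
  Finset.single_le_sum (f := fun s => ∑ y, Q (s, y, z))
    (fun s _ => Finset.sum_nonneg fun _ _ => h _) (Finset.mem_univ s)

lemma margYZ_le_margZ (h : ∀ p, 0 ≤ Q p) (y : Y) (z : Z) : margYZ Q (y, z) ≤ margZ Q z := by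
  unfold margYZ margZ
  exact Finset.sum_le_sum fun s _ =>
    Finset.single_le_sum (fun y _ => h (s, y, z)) (Finset.mem_univ y)

lemma sum_margSZ (z : Z) : ∑ s, margSZ Q (s, z) = margZ Q z := rfl

lemma sum_margYZ (z : Z) : ∑ y, margYZ Q (y, z) = margZ Q z := Finset.sum_comm

lemma sum_margZ (hQ : IsDist Q) : ∑ z, margZ Q z = 1 := by
  have := hQ.2
  rw [Fintype.sum_prod_type] at this
  simp_rw [Fintype.sum_prod_type] at this
  rw [← this]
  unfold margZ
  rw [Finset.sum_comm]
  congr 1; funext s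
  exact Finset.sum_comm

lemma sum3_comm {A B C : Type*} [Fintype A] [Fintype B] [Fintype C] (g : A → B → C → ℝ) :
    ∑ a, ∑ b, ∑ c, g a b c = ∑ c, ∑ a, ∑ b, g a b c := by
  calc ∑ a, ∑ b, ∑ c, g a b c = ∑ a, ∑ c, ∑ b, g a b c :=
        Finset.sum_congr rfl fun a _ => Finset.sum_comm
    _ = ∑ c, ∑ a, ∑ b, g a b c := Finset.sum_comm

lemma condMI_nonneg (hQ : IsDist Q) : 0 ≤ condMI Q := by
  have h0 := hQ.1
  set q : S × Y × Z → ℝ := fun i =>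
    margSZ Q (i.1, i.2.2) * margYZ Q (i.2.1, i.2.2) / margZ Q i.2.2 with hqdef
  have key : ∑ i, Q i * Real.logb 2 (q i / Q i) ≤ 0 := by
    apply klish
    · exact h0
    · intro i
      exact div_nonneg (mul_nonneg (margSZ_nonneg h0 _ _) (margYZ_nonneg h0 _ _)) (margZ_nonneg h0 _)
    · rintro ⟨s, y, z⟩ hpos
      have h1 : 0 < margSZ Q (s, z) := lt_of_lt_of_le hpos (le_margSZ h0 s y z)
      have h2 : 0 < margYZ Q (y, z) := lt_of_lt_of_le hpos (le_margYZ h0 s y z)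
      have h3 : 0 < margZ Q z := lt_of_lt_of_le h1 (margSZ_le_margZ h0 s z)
      exact div_pos (mul_pos h1 h2) h3
    · rw [hQ.2]
      have hz : ∀ z : Z, ∑ s, ∑ y, margSZ Q (s, z) * margYZ Q (y, z) / margZ Q z ≤ margZ Q z := by
        intro z
        have e1 : ∑ s, ∑ y, margSZ Q (s, z) * margYZ Q (y, z) / margZ Q z
            = (∑ s, margSZ Q (s, z)) * (∑ y, margYZ Q (y, z)) / margZ Q z := by
          rw [Finset.sum_mul_sum]
          simp only [Finset.sum_div]
        rw [e1, sum_margSZ, sum_margYZ]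
        rcases eq_or_ne (margZ Q z) 0 with h | h
        · simp [h]
        · rw [mul_div_assoc, div_self h, mul_one]
      calc ∑ i : S × Y × Z, q i
          = ∑ z, ∑ s, ∑ y, margSZ Q (s, z) * margYZ Q (y, z) / margZ Q z := by
            rw [Fintype.sum_prod_type]
            simp_rw [Fintype.sum_prod_type]
            exact sum3_comm _
        _ ≤ ∑ z, margZ Q z := Finset.sum_le_sum fun z _ => hz z
        _ = 1 := sum_margZ hQ
  have heq : condMI Q = -∑ i, Q i * Real.logb 2 (q i / Q i) := by
    unfold condMI
    rw [← Finset.sum_neg_distrib]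
    rw [Fintype.sum_prod_type]
    simp_rw [Fintype.sum_prod_type]
    congr 1; funext s; congr 1; funext y; congr 1; funext z
    rw [← mul_neg, ← Real.logb_inv]
    congr 2
    show Q (s,y,z) * margZ Q z / (margSZ Q (s,z) * margYZ Q (y,z))
      = (margSZ Q (s,z) * margYZ Q (y,z) / margZ Q z / Q (s,y,z))⁻¹
    rw [div_div, inv_div]
    ring
  rw [heq]
  linarith
end Aux2
section Aux3
variable {S Y Z W : Type*} [Fintype S] [Fintype Y] [Fintype Z] [Fintype W] [DecidableEq W]

def liftD (f : S → W) (Q : S × Y × Z → ℝ) : S × (Y × W) × (Z × W) → ℝ :=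
  fun p => if p.2.1.2 = f p.1 ∧ p.2.2.2 = f p.1 then Q (p.1, p.2.1.1, p.2.2.1) else 0

variable (f : S → W) (Q : S × Y × Z → ℝ)

lemma margSY_lift (s : S) (y : Y) (w : W) :
    margSY (liftD f Q) (s, (y, w)) = if w = f s then margSY Q (s, y) else 0 := by
  unfold margSY liftD
  rw [Fintype.sum_prod_type]
  by_cases h : w = f s
  · simp [h, Finset.sum_comm (γ := W)]
  · simp [h]

lemma margSZ_lift (s : S) (z : Z) (w' : W) :
    margSZ (liftD f Q) (s, (z, w')) = if w' = f s then margSZ Q (s, z) else 0 := by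
  unfold margSZ liftD
  rw [Fintype.sum_prod_type]
  by_cases h : w' = f s
  · simp [h]
  · simp [h]

lemma margZ_lift (z : Z) (w' : W) :
    margZ (liftD f Q) (z, w') = ∑ s, if w' = f s then margSZ Q (s, z) else 0 := by
  unfold margZ liftD margSZ
  congr 1; funext s
  rw [Fintype.sum_prod_type]
  by_cases h : w' = f s
  · simp [h]
  · simp [h]

lemma margYZ_lift (y : Y) (w : W) (z : Z) :
    margYZ (liftD f Q) ((y, w), (z, w)) = ∑ s, if w = f s then Q (s, y, z) else 0 := by
  unfold margYZ liftD
  simp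

lemma sum_lift (hQ : IsDist Q) : ∑ p, liftD f Q p = 1 := by
  rw [← hQ.2]
  unfold liftD
  rw [Fintype.sum_prod_type, Fintype.sum_prod_type]
  simp_rw [Fintype.sum_prod_type]
  simp [ite_and]
end Aux3
section Aux4
variable {S Y Z W : Type*} [Fintype S] [Fintype Y] [Fintype Z] [Fintype W] [DecidableEq W]
variable {f : S → W} {Q : S × Y × Z → ℝ}

lemma condMI_lift_le (f : S → W) (hQ : IsDist Q) : condMI (liftD f Q) ≤ condMI Q := by
  have h0 := hQ.1
  set A : W → Z → ℝ := fun w z => ∑ s', if w = f s' then margSZ Q (s', z) else 0 with hA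
  set B : W → Y → Z → ℝ := fun w y z => ∑ s', if w = f s' then Q (s', y, z) else 0 with hB
  have hBnn : ∀ w y z, 0 ≤ B w y z := by
    intro w y z
    simp only [hB]
    exact Finset.sum_nonneg fun s' _ => by split_ifs; exacts [h0 _, le_rfl]
  have hAnn : ∀ w z, 0 ≤ A w z := by
    intro w z
    simp only [hA]
    exact Finset.sum_nonneg fun s' _ => by split_ifs; exacts [margSZ_nonneg h0 _ _, le_rfl]
  have hBleYZ : ∀ w y z, B w y z ≤ margYZ Q (y, z) := by
    intro w y z
    simp only [hB]
    exact Finset.sum_le_sum fun s' _ => by split_ifs; exacts [le_rfl, h0 _]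
  have hBleA : ∀ w y z, B w y z ≤ A w z := by
    intro w y z
    simp only [hB, hA]
    exact Finset.sum_le_sum fun s' _ => by split_ifs; exacts [le_margSZ h0 _ _ _, le_rfl]
  have hsumBw : ∀ y z, ∑ w, B w y z = margYZ Q (y, z) := by
    intro y z
    simp only [hB]
    rw [Finset.sum_comm]
    simp [margYZ]
  have hsumAw : ∀ z, ∑ w, A w z = margZ Q z := by
    intro z
    simp only [hA]
    rw [Finset.sum_comm]
    simp [← sum_margSZ (Q := Q) z]
  have e1 : condMI (liftD f Q) = ∑ s, ∑ y, ∑ z, Q (s, y, z) *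
      Real.logb 2 (Q (s, y, z) * A (f s) z / (margSZ Q (s, z) * B (f s) y z)) := by
    unfold condMI
    simp_rw [Fintype.sum_prod_type]
    simp only [hA, hB, liftD, margZ_lift, margSZ_lift, margYZ_lift, ite_and, ite_mul, zero_mul,
      Finset.sum_ite_irrel, Finset.sum_ite_eq', Finset.mem_univ, if_true, Finset.sum_const_zero]
  have e2 : ∀ s y z, Q (s, y, z) *
      Real.logb 2 (Q (s, y, z) * A (f s) z / (margSZ Q (s, z) * B (f s) y z))
      = Q (s, y, z) * Real.logb 2 (Q (s, y, z) * margZ Q z / (margSZ Q (s, z) * margYZ Q (y, z)))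
        + Q (s, y, z) * Real.logb 2 ((A (f s) z * margYZ Q (y, z) / margZ Q z) / B (f s) y z) := by
    intro s y z
    rcases eq_or_lt_of_le (h0 (s, y, z)) with h | h
    · rw [← h]; ring
    · have hmSZ : 0 < margSZ Q (s, z) := lt_of_lt_of_le h (le_margSZ h0 s y z)
      have hmYZ : 0 < margYZ Q (y, z) := lt_of_lt_of_le h (le_margYZ h0 s y z)
      have hmZ : 0 < margZ Q z := lt_of_lt_of_le hmSZ (margSZ_le_margZ h0 s z)
      have hApos : 0 < A (f s) z := by
        refine lt_of_lt_of_le hmSZ ?_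
        have := Finset.single_le_sum (f := fun s' => if f s = f s' then margSZ Q (s', z) else 0)
          (fun s' _ => by split_ifs; exacts [margSZ_nonneg h0 _ _, le_rfl])
          (Finset.mem_univ s)
        simpa using this
      have hBpos : 0 < B (f s) y z := by
        refine lt_of_lt_of_le h ?_
        have := Finset.single_le_sum (f := fun s' => if f s = f s' then Q (s', y, z) else 0)
          (fun s' _ => by split_ifs; exacts [h0 _, le_rfl])
          (Finset.mem_univ s)
        simpa using this
      have hx1 : Q (s, y, z) * margZ Q z / (margSZ Q (s, z) * margYZ Q (y, z)) ≠ 0 :=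
        ne_of_gt (div_pos (mul_pos h hmZ) (mul_pos hmSZ hmYZ))
      have hx2 : (A (f s) z * margYZ Q (y, z) / margZ Q z) / B (f s) y z ≠ 0 :=
        ne_of_gt (div_pos (div_pos (mul_pos hApos hmYZ) hmZ) hBpos)
      rw [← mul_add, ← Real.logb_mul hx1 hx2]
      congr 2
      field_simp
  have e3 : ∑ s, ∑ y, ∑ z, Q (s, y, z) *
        Real.logb 2 ((A (f s) z * margYZ Q (y, z) / margZ Q z) / B (f s) y z)
      = ∑ y, ∑ z, ∑ w, B w y z *
        Real.logb 2 ((A w z * margYZ Q (y, z) / margZ Q z) / B w y z) := by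
    rw [sum3_comm, sum3_comm]
    refine Finset.sum_congr rfl fun y _ => Finset.sum_congr rfl fun z _ => ?_
    calc ∑ s, Q (s, y, z) * Real.logb 2 ((A (f s) z * margYZ Q (y, z) / margZ Q z) / B (f s) y z)
        = ∑ s, ∑ w, if w = f s then Q (s, y, z) *
            Real.logb 2 ((A w z * margYZ Q (y, z) / margZ Q z) / B w y z) else 0 := by
          refine Finset.sum_congr rfl fun s _ => ?_
          rw [Finset.sum_ite_eq' Finset.univ (f s)
            (fun w => Q (s, y, z) * Real.logb 2 ((A w z * margYZ Q (y, z) / margZ Q z) / B w y z)),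
            if_pos (Finset.mem_univ _)]
      _ = ∑ w, ∑ s, if w = f s then Q (s, y, z) *
            Real.logb 2 ((A w z * margYZ Q (y, z) / margZ Q z) / B w y z) else 0 :=
          Finset.sum_comm
      _ = ∑ w, B w y z * Real.logb 2 ((A w z * margYZ Q (y, z) / margZ Q z) / B w y z) := by
          simp only [hB, Finset.sum_mul, ite_mul, zero_mul]
  have e4 : ∑ y, ∑ z, ∑ w, B w y z *
      Real.logb 2 ((A w z * margYZ Q (y, z) / margZ Q z) / B w y z) ≤ 0 := by
    have hposq : ∀ i : Y × Z × W, 0 < B i.2.2 i.1 i.2.1 →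
        0 < A i.2.2 i.2.1 * margYZ Q (i.1, i.2.1) / margZ Q i.2.1 := by
      rintro ⟨y, z, w⟩ hpos
      dsimp only at hpos ⊢
      have h1 : 0 < margYZ Q (y, z) := lt_of_lt_of_le hpos (hBleYZ w y z)
      have h2 : 0 < A w z := lt_of_lt_of_le hpos (hBleA w y z)
      have h3 : 0 < margZ Q z := lt_of_lt_of_le h1 (margYZ_le_margZ h0 y z)
      exact div_pos (mul_pos h2 h1) h3
    have hsum : ∑ i : Y × Z × W, A i.2.2 i.2.1 * margYZ Q (i.1, i.2.1) / margZ Q i.2.1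
        ≤ ∑ i : Y × Z × W, B i.2.2 i.1 i.2.1 := by
      simp_rw [Fintype.sum_prod_type]
      refine Finset.sum_le_sum fun y _ => Finset.sum_le_sum fun z _ => ?_
      rw [hsumBw]
      have heq : ∑ w, A w z * margYZ Q (y, z) / margZ Q z
          = margZ Q z * margYZ Q (y, z) / margZ Q z := by
        rw [← hsumAw z, Finset.sum_mul, Finset.sum_div]
      rw [heq]
      rcases eq_or_ne (margZ Q z) 0 with hz | hz
      · simp [hz]
        exact margYZ_nonneg h0 y z
      · rw [mul_comm, mul_div_assoc, div_self hz, mul_one]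
    have key := klish (ι := Y × Z × W) (fun i => B i.2.2 i.1 i.2.1)
      (fun i => A i.2.2 i.2.1 * margYZ Q (i.1, i.2.1) / margZ Q i.2.1)
      (fun i => hBnn _ _ _)
      (fun i => div_nonneg (mul_nonneg (hAnn _ _) (margYZ_nonneg h0 _ _)) (margZ_nonneg h0 _))
      hposq hsum
    calc ∑ y, ∑ z, ∑ w, B w y z *
        Real.logb 2 ((A w z * margYZ Q (y, z) / margZ Q z) / B w y z)
        = ∑ i : Y × Z × W, B i.2.2 i.1 i.2.1 *
          Real.logb 2 ((A i.2.2 i.2.1 * margYZ Q (i.1, i.2.1) / margZ Q i.2.1) / B i.2.2 i.1 i.2.1) := by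
          simp_rw [Fintype.sum_prod_type]
      _ ≤ 0 := key
  have e5 : condMI (liftD f Q) = condMI Q + ∑ s, ∑ y, ∑ z, Q (s, y, z) *
      Real.logb 2 ((A (f s) z * margYZ Q (y, z) / margZ Q z) / B (f s) y z) := by
    rw [e1]
    simp_rw [e2]
    simp_rw [Finset.sum_add_distrib]
    rfl
  rw [e5, e3]
  linarith
end Aux4
section Aux5
variable {S Y Z W : Type*} [Fintype S] [Fintype Y] [Fintype Z] [Fintype W] [DecidableEq W]

lemma liftD_mem (f : S → W) {P Q : S × Y × Z → ℝ} (hQ : IsDist Q)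
    (hmem : Q ∈ marginalPolytope P) : liftD f Q ∈ marginalPolytope (liftD f P) := by
  obtain ⟨_, hSY, hSZ⟩ := hmem
  refine ⟨⟨fun p => ?_, sum_lift f Q hQ⟩, ?_, ?_⟩
  · unfold liftD; split_ifs; exacts [hQ.1 _, le_rfl]
  · funext p
    obtain ⟨s, y, w⟩ := p
    rw [margSY_lift, margSY_lift, hSY]
  · funext p
    obtain ⟨s, z, w⟩ := p
    rw [margSZ_lift, margSZ_lift, hSZ]
end Aux5
/-- monotonicity of `UI` under one-way public communication:
`UI(S;(Y,f(S))\(Z,f(S))) ≤ UI(S;Y\Z)`. -/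
theorem UI_mono_public_communication
    {S Y Z W : Type*} [Fintype S] [Fintype Y] [Fintype Z] [Fintype W] [DecidableEq W]
    (P : S × Y × Z → ℝ) (hP : IsDist P) (f : S → W) :
    UI (fun p : S × (Y × W) × (Z × W) =>
        if p.2.1.2 = f p.1 ∧ p.2.2.2 = f p.1 then P (p.1, p.2.1.1, p.2.2.1) else 0) ≤
      UI P := by
  show UI (liftD f P) ≤ UI P
  have hbdd : BddBelow (condMI '' marginalPolytope (liftD f P)) := by
    refine ⟨0, ?_⟩
    rintro x ⟨R, hR, rfl⟩
    exact condMI_nonneg hR.1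
  have hPmem : P ∈ marginalPolytope P := ⟨hP, rfl, rfl⟩
  refine le_csInf ⟨condMI P, ⟨P, hPmem, rfl⟩⟩ ?_
  rintro b ⟨Q, hQmem, rfl⟩
  calc sInf (condMI '' marginalPolytope (liftD f P))
      ≤ condMI (liftD f Q) := csInf_le hbdd ⟨liftD f Q, liftD_mem f hQmem.1 hQmem, rfl⟩
    _ ≤ condMI Q := condMI_lift_le f hQmem.1
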